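/- For a finite set Z = {z_1, ..., z_n} ⊂ D \ {0} of distinct points, the normalized Shapiro-Shields function g_Z = f_Z/||f_Z|| is H-inner: ||g_Z|| = 1 and ⟨z^k g_Z, g_Z⟩ = 0 for all k ≥ 1. -/

import Mathlib

open Filter Topology
open scoped InnerProductSpace ComplexConjugate

/-- A weighted Hardy space `H²_ω`: a Hilbert space with an orthogonal basis of
monomials `e k` (representing `z^k`) with `‖e k‖² = ω k`, together with the shift
operator `S` (multiplication by `z`). -/
structure WeightedHardySpace where
  E : Type
  [instN : NormedAddCommGroup E]
  [instI : InnerProductSpace ℂ E]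
  [instC : CompleteSpace E]
  ω : ℕ → ℝ
  hωpos : ∀ k, 0 < ω k
  hω0 : ω 0 = 1
  hωlim : Tendsto (fun k => ω k / ω (k + 1)) atTop (𝓝 1)
  e : ℕ → E
  horth : ∀ j k, ⟪e j, e k⟫_ℂ = if j = k then (ω k : ℂ) else 0
  hdense : (Submodule.span ℂ (Set.range e)).topologicalClosure = ⊤
  S : E →L[ℂ] E
  hshift : ∀ k, S (e k) = e (k + 1)

attribute [instance] WeightedHardySpace.instN WeightedHardySpace.instI WeightedHardySpace.instC

namespace WeightedHardySpace

variable (H : WeightedHardySpace)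

/-- The constant function `1`. -/
noncomputable def one : H.E := H.e 0

/-- The `k`-th Taylor coefficient of `f`. -/
noncomputable def coeff (f : H.E) (k : ℕ) : ℂ := ⟪H.e k, f⟫_ℂ / (H.ω k : ℂ)

/-- Evaluation of `f` at a point `w` of the unit disk. -/
noncomputable def eval (f : H.E) (w : ℂ) : ℂ := ∑' k, H.coeff f k * w ^ k

/-- Multiplication of `f` by the polynomial `p`. -/
noncomputable def polyMul (p : Polynomial ℂ) (f : H.E) : H.E :=
  ∑ i ∈ p.support, p.coeff i • ((H.S ^ i) f)

/-- The closed shift-invariant subspace `[f]` generated by `f`. -/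
noncomputable def genSub (f : H.E) : Submodule ℂ H.E :=
  (Submodule.span ℂ (Set.range fun p : Polynomial ℂ => H.polyMul p f)).topologicalClosure

/-- `f` is `H`-inner: unit norm and `⟨z^j f, f⟩ = 0` for all `j ≥ 1`. -/
def IsInner (f : H.E) : Prop :=
  ‖f‖ = 1 ∧ ∀ j : ℕ, 1 ≤ j → ⟪(H.S ^ j) f, f⟫_ℂ = 0

end WeightedHardySpace

namespace WeightedHardySpace

variable (H : WeightedHardySpace)

lemma omega_pos (m : ℕ) : (0:ℝ) < H.ω m := H.hωpos m

lemma omega_ne (m : ℕ) : (H.ω m : ℂ) ≠ 0 := by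
  exact_mod_cast Complex.ofReal_ne_zero.mpr (H.hωpos m).ne'

lemma coeff_e (m j : ℕ) : H.coeff (H.e m) j = if j = m then 1 else 0 := by
  unfold coeff
  rw [H.horth]
  rcases eq_or_ne j m with rfl | hjm
  · simp [H.omega_ne]
  · simp [hjm]

lemma norm_e (m : ℕ) : ‖H.e m‖ = Real.sqrt (H.ω m) := by
  rw [@norm_eq_sqrt_re_inner ℂ, H.horth]
  simp

lemma summable_coeff (g : H.E) {w : ℂ} (hw : ‖w‖ < 1) :
    Summable fun m => H.coeff g m * w ^ m := by
  rcases eq_or_ne w 0 with rfl | hw0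
  · apply summable_of_ne_finset_zero (s := ({0} : Finset ℕ))
    intro b hb
    simp only [Finset.mem_singleton] at hb
    simp [zero_pow hb]
  · have hwpos : 0 < ‖w‖ := norm_pos_iff.mpr hw0
    have hmaj : Summable fun m => ‖g‖ * (‖w‖ ^ m / Real.sqrt (H.ω m)) := by
      apply Summable.mul_left
      apply summable_of_ratio_test_tendsto_lt_one hw
      · filter_upwards with m
        exact (div_pos (pow_pos hwpos m) (Real.sqrt_pos.mpr (H.hωpos m))).ne'
      · have hlim : Tendsto (fun m => Real.sqrt (H.ω m / H.ω (m + 1)) * ‖w‖)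
            atTop (𝓝 ‖w‖) := by
          have := (H.hωlim.sqrt).mul_const ‖w‖
          simpa using this
        apply hlim.congr
        intro m
        have h1 : (0:ℝ) < Real.sqrt (H.ω m) := Real.sqrt_pos.mpr (H.hωpos m)
        have h2 : (0:ℝ) < Real.sqrt (H.ω (m+1)) := Real.sqrt_pos.mpr (H.hωpos (m+1))
        have ha : ‖w‖ ^ m ≠ 0 := (pow_pos hwpos m).ne'
        rw [Real.sqrt_div (H.hωpos m).le]
        rw [Real.norm_of_nonneg (by positivity), Real.norm_of_nonneg (by positivity)]
        rw [div_div_div_comm, pow_succ, mul_div_cancel_left₀ _ ha, div_div_eq_mul_div]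
        ring
    apply Summable.of_norm_bounded hmaj
    intro m
    rw [norm_mul, norm_pow]
    have h1 : ‖H.coeff g m‖ ≤ ‖g‖ / Real.sqrt (H.ω m) := by
      unfold coeff
      rw [norm_div, Complex.norm_real, Real.norm_of_nonneg (H.hωpos m).le]
      have h2 : ‖⟪H.e m, g⟫_ℂ‖ ≤ Real.sqrt (H.ω m) * ‖g‖ := by
        simpa [H.norm_e] using norm_inner_le_norm (𝕜 := ℂ) (H.e m) g
      have h3 : (0:ℝ) < Real.sqrt (H.ω m) := Real.sqrt_pos.mpr (H.hωpos m)
      rw [div_le_div_iff₀ (H.hωpos m) ] at *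
      · calc ‖⟪H.e m, g⟫_ℂ‖ * Real.sqrt (H.ω m) ≤ (Real.sqrt (H.ω m) * ‖g‖) * Real.sqrt (H.ω m) := by
              gcongr
        _ = ‖g‖ * H.ω m := by
              rw [show Real.sqrt (H.ω m) * ‖g‖ * Real.sqrt (H.ω m)
                  = ‖g‖ * (Real.sqrt (H.ω m) * Real.sqrt (H.ω m)) by ring,
                Real.mul_self_sqrt (H.hωpos m).le]
      · exact h3
    calc ‖H.coeff g m‖ * ‖w‖ ^ m ≤ (‖g‖ / Real.sqrt (H.ω m)) * ‖w‖ ^ m := by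
          gcongr
    _ = ‖g‖ * (‖w‖ ^ m / Real.sqrt (H.ω m)) := by ring

lemma eval_e (m : ℕ) (w : ℂ) : H.eval (H.e m) w = w ^ m := by
  unfold eval
  have h : (fun j => H.coeff (H.e m) j * w ^ j) = fun j => if j = m then w ^ m else 0 := by
    funext j
    rw [H.coeff_e]
    rcases eq_or_ne j m with rfl | hjm
    · simp
    · simp [hjm]
  rw [h, tsum_ite_eq]

lemma dense_e : Dense (↑(Submodule.span ℂ (Set.range H.e)) : Set H.E) :=
  Submodule.dense_iff_topologicalClosure_eq_top.mpr H.hdense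

lemma inner_e0_S (g : H.E) : ⟪H.e 0, H.S g⟫_ℂ = 0 := by
  have h : (innerSL ℂ (H.e 0)).comp H.S = (0 : H.E →L[ℂ] ℂ) := by
    apply ContinuousLinearMap.ext_on H.dense_e
    rintro x ⟨j, rfl⟩
    simp [H.hshift, H.horth]
  simpa using ContinuousLinearMap.ext_iff.mp h g

lemma inner_e_succ_S (m : ℕ) (g : H.E) :
    ⟪H.e (m+1), H.S g⟫_ℂ = ((H.ω (m+1) : ℂ) / (H.ω m : ℂ)) * ⟪H.e m, g⟫_ℂ := by
  have h : (innerSL ℂ (H.e (m+1))).comp H.S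
      = ((H.ω (m+1) : ℂ) / (H.ω m : ℂ)) • innerSL ℂ (H.e m) := by
    apply ContinuousLinearMap.ext_on H.dense_e
    rintro x ⟨j, rfl⟩
    simp only [ContinuousLinearMap.comp_apply, ContinuousLinearMap.smul_apply,
      innerSL_apply_apply, smul_eq_mul]
    rw [H.hshift, H.horth, H.horth]
    rcases eq_or_ne m j with rfl | hmj
    · simp [div_mul_cancel₀ _ (H.omega_ne m)]
    · simp [hmj, fun h => hmj (Nat.succ_injective h)]
  simpa using ContinuousLinearMap.ext_iff.mp h g

lemma coeff_S_zero (g : H.E) : H.coeff (H.S g) 0 = 0 := by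
  unfold coeff
  rw [H.inner_e0_S, zero_div]

lemma coeff_S_succ (g : H.E) (m : ℕ) : H.coeff (H.S g) (m+1) = H.coeff g m := by
  unfold coeff
  rw [H.inner_e_succ_S]
  field_simp [H.omega_ne m, H.omega_ne (m+1)]

lemma eval_S (g : H.E) {w : ℂ} (hw : ‖w‖ < 1) :
    H.eval (H.S g) w = w * H.eval g w := by
  unfold eval
  rw [Summable.tsum_eq_zero_add (H.summable_coeff (H.S g) hw)]
  simp only [H.coeff_S_zero, H.coeff_S_succ, zero_mul, zero_add, pow_succ]
  rw [← tsum_mul_left]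
  exact tsum_congr fun b => by ring

lemma coeff_add (f g : H.E) (m : ℕ) : H.coeff (f + g) m = H.coeff f m + H.coeff g m := by
  unfold coeff
  rw [inner_add_right, add_div]

lemma coeff_smul (c : ℂ) (f : H.E) (m : ℕ) : H.coeff (c • f) m = c * H.coeff f m := by
  unfold coeff
  rw [inner_smul_right, mul_div_assoc]

lemma eval_zero (w : ℂ) : H.eval (0 : H.E) w = 0 := by
  unfold eval coeff
  simp

lemma eval_smul (c : ℂ) (f : H.E) (w : ℂ) : H.eval (c • f) w = c * H.eval f w := by
  unfold eval
  rw [← tsum_mul_left]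
  exact tsum_congr fun m => by rw [H.coeff_smul]; ring

lemma eval_add (f g : H.E) {w : ℂ} (hw : ‖w‖ < 1) :
    H.eval (f + g) w = H.eval f w + H.eval g w := by
  unfold eval
  rw [← Summable.tsum_add (H.summable_coeff f hw) (H.summable_coeff g hw)]
  exact tsum_congr fun m => by rw [H.coeff_add]; ring

lemma eval_sub (f g : H.E) {w : ℂ} (hw : ‖w‖ < 1) :
    H.eval (f - g) w = H.eval f w - H.eval g w := by
  have hg : f - g = f + (-1 : ℂ) • g := by
    rw [neg_one_smul]; abel
  rw [hg, H.eval_add f _ hw, H.eval_smul]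
  ring

lemma eval_sum {ι : Type*} (s : Finset ι) (f : ι → H.E) {w : ℂ} (hw : ‖w‖ < 1) :
    H.eval (∑ i ∈ s, f i) w = ∑ i ∈ s, H.eval (f i) w := by
  classical
  induction s using Finset.induction with
  | empty => simpa using H.eval_zero w
  | insert _ _ hnot ih =>
      rw [Finset.sum_insert hnot, Finset.sum_insert hnot, H.eval_add _ _ hw, ih]

lemma coeff_pow_S_zero (g : H.E) (j : ℕ) (hj : 1 ≤ j) : H.coeff ((H.S ^ j) g) 0 = 0 := by
  obtain ⟨j', rfl⟩ : ∃ j', j = j' + 1 := ⟨j - 1, by omega⟩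
  rw [pow_succ', ContinuousLinearMap.mul_apply]
  exact H.coeff_S_zero _

lemma eval_pow_S (g : H.E) (j : ℕ) {w : ℂ} (hw : ‖w‖ < 1) :
    H.eval ((H.S ^ j) g) w = w ^ j * H.eval g w := by
  induction j with
  | zero => simp
  | succ j ih =>
      rw [pow_succ', ContinuousLinearMap.mul_apply, H.eval_S _ hw, ih, pow_succ]
      ring

end WeightedHardySpace

lemma vand_aux {n : ℕ} (w : Fin n → ℂ) (hw : Function.Injective w) (v : Fin n → ℂ)
    (hv : ∀ m : Fin n, ∑ s, v s * w s ^ (m : ℕ) = 0) : v = 0 := by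
  have hdet : (Matrix.vandermonde w).det ≠ 0 := Matrix.det_vandermonde_ne_zero_iff.mpr hw
  apply Matrix.eq_zero_of_vecMul_eq_zero hdet
  funext m
  simpa [Matrix.vecMul, Matrix.vandermonde, dotProduct] using hv m

/-- Theorem 3.5: for a finite set of distinct points of `𝔻 \ {0}`, the normalized
Shapiro-Shields function `g_Z = f_Z / ‖f_Z‖` is `H`-inner. -/
theorem shapiroShields_isInner (H : WeightedHardySpace) (n : ℕ) (z : Fin n → ℂ)
    (hz : ∀ i, ‖z i‖ < 1) (hz0 : ∀ i, z i ≠ 0) (hinj : Function.Injective z)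
    (k : Fin n → H.E) (hk : ∀ i, ∀ g : H.E, ⟪k i, g⟫_ℂ = H.eval g (z i)) :
    let K : Matrix (Fin n) (Fin n) ℂ := Matrix.of fun s t => H.eval (k s) (z t)
    let fZ : H.E := K.det • H.one -
      ∑ s : Fin n, (K.updateRow s (fun _ => (1 : ℂ))).det • k s
    H.IsInner (((‖fZ‖ : ℂ))⁻¹ • fZ) := by
  intro K fZ
  classical
  set c0 : ℂ := K.det with hc0
  set c : Fin n → ℂ := fun s => (K.updateRow s (fun _ => (1:ℂ))).det with hc
  have hfZ : fZ = c0 • H.one - ∑ s, c s • k s := rfl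
  have hKst : ∀ s t, K s t = H.eval (k s) (z t) := fun s t => rfl
  -- Cramer identity
  have hcramer : ∀ t, ∑ s, c s * K s t = c0 := by
    intro t
    have h := congrFun (Matrix.mulVec_cramer K.transpose (fun _ => (1:ℂ))) t
    simp only [Matrix.mulVec, dotProduct, Matrix.cramer_apply,
      Matrix.updateCol_transpose, Matrix.det_transpose, Matrix.transpose_apply,
      Pi.smul_apply, smul_eq_mul, mul_one] at h
    rw [hc0, ← h]
    exact Finset.sum_congr rfl fun s _ => mul_comm _ _
  -- f_Z vanishes at the points z t
  have hone : ∀ t, H.eval H.one (z t) = 1 := by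
    intro t
    have : H.one = H.e 0 := rfl
    rw [this, H.eval_e, pow_zero]
  have hevalfZ : ∀ t, H.eval fZ (z t) = 0 := by
    intro t
    rw [hfZ, H.eval_sub _ _ (hz t), H.eval_smul, hone t, mul_one,
      H.eval_sum _ _ (hz t)]
    have h1 : ∀ s, H.eval (c s • k s) (z t) = c s * K s t := fun s => by
      rw [H.eval_smul, hKst]
    rw [Finset.sum_congr rfl fun s _ => h1 s, hcramer t, sub_self]
  -- det K ≠ 0
  have hdetK : c0 ≠ 0 := by
    intro h0
    obtain ⟨v, hvne, hv⟩ := Matrix.exists_mulVec_eq_zero_iff.mpr h0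
    set g : H.E := ∑ s, (starRingEnd ℂ) (v s) • k s with hg
    have hgk : ∀ t, ⟪g, k t⟫_ℂ = 0 := by
      intro t
      have hvt : ∑ s, K t s * v s = 0 := by
        have := congrFun hv t
        simpa [Matrix.mulVec, dotProduct] using this
      rw [hg, sum_inner]
      calc ∑ s, ⟪(starRingEnd ℂ) (v s) • k s, k t⟫_ℂ
          = ∑ s, v s * ⟪k s, k t⟫_ℂ := by
            exact Finset.sum_congr rfl fun s _ => by rw [inner_smul_left]; simp
        _ = ∑ s, K t s * v s := by
            exact Finset.sum_congr rfl fun s _ => by rw [hk s (k t)]; rw [← hKst]; ring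
        _ = 0 := hvt
    have hg0 : g = 0 := by
      rw [← inner_self_eq_zero (𝕜 := ℂ)]
      nth_rewrite 2 [hg]
      rw [inner_sum]
      exact Finset.sum_eq_zero fun s _ => by rw [inner_smul_right, hgk s, mul_zero]
    have hvm : ∀ m : Fin n, ∑ s, v s * (z s) ^ (m : ℕ) = 0 := by
      intro m
      have h1 : ⟪g, H.e (m : ℕ)⟫_ℂ = 0 := by rw [hg0]; exact inner_zero_left _
      rw [hg, sum_inner] at h1
      calc ∑ s, v s * (z s) ^ (m:ℕ)
          = ∑ s, ⟪(starRingEnd ℂ) (v s) • k s, H.e (m:ℕ)⟫_ℂ := by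
            refine Finset.sum_congr rfl fun s _ => ?_
            rw [inner_smul_left, hk s, H.eval_e]
            simp
        _ = 0 := h1
    exact hvne (vand_aux z hinj v hvm)
  -- f_Z ≠ 0
  have hconjinj : Function.Injective (fun s => (starRingEnd ℂ) (z s)) :=
    fun a b hab => hinj ((starRingEnd ℂ).injective hab)
  have hfZne : fZ ≠ 0 := by
    intro h0
    have hek : ∀ (m : ℕ) (s : Fin n), ⟪H.e m, k s⟫_ℂ = (starRingEnd ℂ) ((z s) ^ m) := by
      intro m s
      rw [← inner_conj_symm, hk s, H.eval_e]
    have hcs : ∀ s, c s = 0 := by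
      have hvm : ∀ m : Fin n,
          ∑ s, (c s * (starRingEnd ℂ) (z s)) * ((starRingEnd ℂ) (z s)) ^ (m : ℕ) = 0 := by
        intro m
        have h1 : ⟪H.e ((m : ℕ) + 1), fZ⟫_ℂ = 0 := by rw [h0]; exact inner_zero_right _
        rw [hfZ, inner_sub_right, inner_smul_right, inner_sum] at h1
        have he0 : ⟪H.e ((m:ℕ)+1), H.one⟫_ℂ = 0 := by
          have : H.one = H.e 0 := rfl
          rw [this, H.horth]
          simp
        rw [he0, mul_zero, zero_sub, neg_eq_zero] at h1
        calc ∑ s, (c s * (starRingEnd ℂ) (z s)) * ((starRingEnd ℂ) (z s)) ^ (m : ℕ)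
            = ∑ s, ⟪H.e ((m:ℕ)+1), c s • k s⟫_ℂ := by
              refine Finset.sum_congr rfl fun s _ => ?_
              rw [inner_smul_right, hek ((m:ℕ)+1) s, map_pow, pow_succ]
              ring
          _ = 0 := h1
      have := vand_aux (fun s => (starRingEnd ℂ) (z s)) hconjinj
        (fun s => c s * (starRingEnd ℂ) (z s)) hvm
      intro s
      have hs := congrFun this s
      simp only [Pi.zero_apply, mul_eq_zero] at hs
      rcases hs with hs | hs
      · exact hs
      · exact absurd ((starRingEnd ℂ).injective (by simpa using hs)) (hz0 s)
    have h1 : ⟪H.e 0, fZ⟫_ℂ = 0 := by rw [h0]; exact inner_zero_right _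
    rw [hfZ, inner_sub_right, inner_smul_right, inner_sum] at h1
    have he00 : ⟪H.e 0, H.one⟫_ℂ = 1 := by
      have : H.one = H.e 0 := rfl
      rw [this, H.horth]
      simp [H.hω0]
    rw [he00, mul_one] at h1
    have h2 : ∑ s, ⟪H.e 0, c s • k s⟫_ℂ = 0 :=
      Finset.sum_eq_zero fun s _ => by rw [inner_smul_right, hcs s, zero_mul]
    rw [h2, sub_zero] at h1
    exact hdetK h1
  -- conclude
  constructor
  · rw [norm_smul, norm_inv, Complex.norm_real, Real.norm_of_nonneg (norm_nonneg fZ),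
      inv_mul_cancel₀ (norm_ne_zero_iff.mpr hfZne)]
  · intro j hj
    have key : ⟪fZ, (H.S ^ j) fZ⟫_ℂ = 0 := by
      set g : H.E := (H.S ^ j) fZ with hgdef
      have h1 : ⟪H.e 0, g⟫_ℂ = 0 := by
        have := H.coeff_pow_S_zero fZ j hj
        unfold WeightedHardySpace.coeff at this
        rwa [div_eq_zero_iff, or_iff_left (H.omega_ne 0)] at this
      have h2 : ∀ s, ⟪k s, g⟫_ℂ = 0 := fun s => by
        rw [hgdef, hk s, H.eval_pow_S _ _ (hz s), hevalfZ s, mul_zero]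
      rw [hfZ, inner_sub_left, inner_smul_left, sum_inner]
      have hone' : (H.one : H.E) = H.e 0 := rfl
      rw [hone', h1, mul_zero, zero_sub, neg_eq_zero]
      exact Finset.sum_eq_zero fun s _ => by rw [inner_smul_left, h2 s, mul_zero]
    have hmap : (H.S ^ j) (((‖fZ‖ : ℂ))⁻¹ • fZ) = ((‖fZ‖ : ℂ))⁻¹ • ((H.S ^ j) fZ) :=
      map_smul _ _ _
    rw [hmap, inner_smul_left, inner_smul_right, ← inner_conj_symm, key, map_zero,
      mul_zero, mul_zero]
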